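/- Let r ≥ 5 with r ∉ {6, 10}, let q be a primitive r-th root of unity, and suppose π: B₃ → U(2) is a homomorphism from the braid group B₃ such that each π(g_i) = q e_i - (1 - e_i) for nontrivial orthogonal projections e_i, and π(g₁), π(g₂) do not commute modulo scalars. Then the image of B₃ in PU(2) is infinite. -/

import Mathlib

lemma proj_entries (e : Matrix (Fin 2) (Fin 2) ℂ) (he : e * e = e) (h0 : e ≠ 0) (h1 : e ≠ 1) :
    e 0 0 + e 1 1 = 1 ∧ e 0 1 * e 1 0 = e 0 0 - (e 0 0)^2 := by
  have E00 := congrFun (congrFun he 0) 0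
  have E01 := congrFun (congrFun he 0) 1
  have E10 := congrFun (congrFun he 1) 0
  have E11 := congrFun (congrFun he 1) 1
  simp only [Matrix.mul_apply, Fin.sum_univ_two] at E00 E01 E10 E11
  by_cases hs : e 0 0 + e 1 1 = 1
  · exact ⟨hs, by linear_combination E00⟩
  · exfalso
    have hb : e 0 1 = 0 := by
      by_contra hb
      apply hs
      have : e 0 1 * (e 0 0 + e 1 1 - 1) = 0 := by linear_combination E01
      rcases mul_eq_zero.mp this with h | h
      · exact absurd h hb
      · linear_combination h
    have hc : e 1 0 = 0 := by
      by_contra hc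
      apply hs
      have : e 1 0 * (e 0 0 + e 1 1 - 1) = 0 := by linear_combination E10
      rcases mul_eq_zero.mp this with h | h
      · exact absurd h hc
      · linear_combination h
    have ha : e 0 0 * (e 0 0 - 1) = 0 := by linear_combination E00 - (e 1 0) * hb
    have hd : e 1 1 * (e 1 1 - 1) = 0 := by linear_combination E11 - (e 0 1) * hc
    rcases mul_eq_zero.mp ha with ha | ha <;> rcases mul_eq_zero.mp hd with hd | hd
    · apply h0
      ext i j
      fin_cases i <;> fin_cases j <;> simp [ha, hb, hc, hd]
    · exact hs (by rw [ha]; linear_combination hd)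
    · exact hs (by rw [hd]; linear_combination ha)
    · apply h1
      ext i j
      fin_cases i <;> fin_cases j <;>
        simp [hb, hc, Matrix.one_apply] <;> first | linear_combination ha | linear_combination hd | linear_combination hd - ha

lemma U2_eq_one (w : Matrix (Fin 2) (Fin 2) ℂ) (hw : w ∈ Matrix.unitaryGroup (Fin 2) ℂ)
    (hdet : w.det = 1) (htr : w.trace = 2) : w = 1 := by
  obtain ⟨a, b, c, d, rfl⟩ : ∃ a b c d, w = !![a, b; c, d] := ⟨_, _, _, _, Matrix.eta_fin_two w⟩
  have hsw : star !![a, b; c, d] * !![a, b; c, d] = 1 := hw.1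
  rw [Matrix.det_fin_two_of] at hdet
  rw [Matrix.trace_fin_two_of] at htr
  have hB : !![a, b; c, d] * !![d, -b; -c, a] = 1 := by
    ext i j
    fin_cases i <;> fin_cases j <;>
      simp [Matrix.mul_apply, Fin.sum_univ_two, Matrix.one_apply] <;>
      (first | linear_combination hdet | linear_combination -hdet | ring)
  have hstar : star !![a, b; c, d] = !![d, -b; -c, a] := by
    calc star !![a, b; c, d] = star !![a, b; c, d] * (!![a, b; c, d] * !![d, -b; -c, a]) := by
          rw [hB, mul_one]
    _ = (star !![a, b; c, d] * !![a, b; c, d]) * !![d, -b; -c, a] := by rw [mul_assoc]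
    _ = _ := by rw [hsw, one_mul]
  have h00 : (starRingEnd ℂ) a = d := by
    have := congrFun (congrFun hstar 0) 0
    simpa [Matrix.star_apply] using this
  have h10 : (starRingEnd ℂ) c = -b := by
    have := congrFun (congrFun hstar 0) 1
    simpa [Matrix.star_apply] using this
  have hnorm : (starRingEnd ℂ) a * a + (starRingEnd ℂ) c * c = 1 := by
    have := congrFun (congrFun hsw 0) 0
    simpa [Matrix.mul_apply, Fin.sum_univ_two, Matrix.star_apply, Matrix.one_apply] using this
  have h1 : a + (starRingEnd ℂ) a = 2 := by rw [h00]; exact htr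
  have h2 : (2 * a.re : ℝ) = (2:ℝ) := by
    rw [Complex.add_conj] at h1
    exact_mod_cast h1
  have hre1 : a.re = 1 := by linarith
  have hn : Complex.normSq a + Complex.normSq c = 1 := by
    have e1 : (starRingEnd ℂ) a * a = (Complex.normSq a : ℂ) := by
      rw [mul_comm]; exact Complex.mul_conj _
    have e2 : (starRingEnd ℂ) c * c = (Complex.normSq c : ℂ) := by
      rw [mul_comm]; exact Complex.mul_conj _
    rw [e1, e2] at hnorm
    exact_mod_cast hnorm
  rw [Complex.normSq_apply a] at hn
  have him : a.im = 0 := by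
    nlinarith [Complex.normSq_nonneg c, sq_nonneg a.im]
  have hcz : Complex.normSq c = 0 := by nlinarith
  have hc0 : c = 0 := Complex.normSq_eq_zero.mp hcz
  have ha1 : a = 1 := Complex.ext (by simp [hre1]) (by simp [him])
  have hd1 : d = 1 := by rw [← h00, ha1]; simp
  have hb0 : b = 0 := by
    rw [hc0] at h10
    simpa using h10.symm
  rw [ha1, hb0, hc0, hd1]
  ext i j
  fin_cases i <;> fin_cases j <;> simp [Matrix.one_apply]

lemma center_scalar (A : Matrix.unitaryGroup (Fin 2) ℂ)
    (hA : A ∈ Subgroup.center (Matrix.unitaryGroup (Fin 2) ℂ)) :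
    ∃ c : ℂ, (A : Matrix (Fin 2) (Fin 2) ℂ) = c • 1 := by
  have hD : (!![1, 0; 0, -1] : Matrix (Fin 2) (Fin 2) ℂ) ∈ Matrix.unitaryGroup (Fin 2) ℂ := by
    rw [Matrix.mem_unitaryGroup_iff]
    ext i j
    fin_cases i <;> fin_cases j <;>
      simp [Matrix.mul_apply, Fin.sum_univ_two, Matrix.star_apply, Matrix.one_apply]
  have hS : (!![0, 1; 1, 0] : Matrix (Fin 2) (Fin 2) ℂ) ∈ Matrix.unitaryGroup (Fin 2) ℂ := by
    rw [Matrix.mem_unitaryGroup_iff]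
    ext i j
    fin_cases i <;> fin_cases j <;>
      simp [Matrix.mul_apply, Fin.sum_univ_two, Matrix.star_apply, Matrix.one_apply]
  rw [Subgroup.mem_center_iff] at hA
  have h1 := hA ⟨_, hD⟩
  have h2 := hA ⟨_, hS⟩
  have h1' : !![(1:ℂ), 0; 0, -1] * (A : Matrix (Fin 2) (Fin 2) ℂ)
      = (A : Matrix (Fin 2) (Fin 2) ℂ) * !![(1:ℂ), 0; 0, -1] := congrArg Subtype.val h1
  have h2' : !![(0:ℂ), 1; 1, 0] * (A : Matrix (Fin 2) (Fin 2) ℂ)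
      = (A : Matrix (Fin 2) (Fin 2) ℂ) * !![(0:ℂ), 1; 1, 0] := congrArg Subtype.val h2
  set M := (A : Matrix (Fin 2) (Fin 2) ℂ) with hM
  have e01 : M 0 1 = 0 := by
    have := congrFun (congrFun h1' 0) 1
    simp [Matrix.mul_apply, Fin.sum_univ_two] at this
    linear_combination this / 2
  have e10 : M 1 0 = 0 := by
    have := congrFun (congrFun h1' 1) 0
    simp [Matrix.mul_apply, Fin.sum_univ_two] at this
    linear_combination -this / 2
  have e00 : M 1 1 = M 0 0 := by
    have := congrFun (congrFun h2' 0) 1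
    simpa [Matrix.mul_apply, Fin.sum_univ_two] using this
  refine ⟨M 0 0, ?_⟩
  ext i j
  fin_cases i <;> fin_cases j <;>
    simp [Matrix.one_apply, e01, e10]
  exact e00

lemma mulVec_pow_eig (w : Matrix (Fin 2) (Fin 2) ℂ) (lam : ℂ) (x : Fin 2 → ℂ)
    (hx : w.mulVec x = lam • x) (n : ℕ) : (w ^ n).mulVec x = lam ^ n • x := by
  induction n with
  | zero => simp [Matrix.one_mulVec]
  | succ n ih =>
    rw [pow_succ, ← Matrix.mulVec_mulVec, hx, Matrix.mulVec_smul, ih, smul_smul, pow_succ,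
      mul_comm]

lemma eigen_pow (w : Matrix (Fin 2) (Fin 2) ℂ) (lam c : ℂ) (n : ℕ)
    (hchar : lam ^ 2 - w.trace * lam + w.det = 0) (hn : w ^ n = c • 1) : lam ^ n = c := by
  rw [Matrix.trace_fin_two, Matrix.det_fin_two] at hchar
  obtain ⟨x, hx0, hx⟩ : ∃ x : Fin 2 → ℂ, x ≠ 0 ∧ w.mulVec x = lam • x := by
    by_cases hb : w 0 1 ≠ 0
    · refine ⟨![w 0 1, lam - w 0 0], fun h => hb (congrFun h 0), ?_⟩
      funext i
      fin_cases i <;>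
        simp [Matrix.mulVec, dotProduct, Fin.sum_univ_two] <;>
        (first | linear_combination hchar | linear_combination -hchar | linear_combination)
    · by_cases hc : w 1 0 ≠ 0
      · refine ⟨![lam - w 1 1, w 1 0], fun h => hc (congrFun h 1), ?_⟩
        funext i
        fin_cases i <;>
          simp [Matrix.mulVec, dotProduct, Fin.sum_univ_two] <;>
          (first | linear_combination hchar | linear_combination -hchar | linear_combination)
      · push_neg at hb hc
        have hfac : (lam - w 0 0) * (lam - w 1 1) = 0 := by
          linear_combination hchar + w 1 0 * hb
        rcases mul_eq_zero.mp hfac with h | h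
        · refine ⟨![1, 0], fun hh => by simpa using congrFun hh 0, ?_⟩
          funext i
          fin_cases i <;>
            simp [Matrix.mulVec, dotProduct, Fin.sum_univ_two, hb, hc] <;>
            (first | linear_combination h | linear_combination -h | linear_combination)
        · refine ⟨![0, 1], fun hh => by simpa using congrFun hh 1, ?_⟩
          funext i
          fin_cases i <;>
            simp [Matrix.mulVec, dotProduct, Fin.sum_univ_two, hb, hc] <;>
            (first | linear_combination h | linear_combination -h | linear_combination)
  have hpow := mulVec_pow_eig w lam x hx n
  rw [hn, Matrix.smul_mulVec, Matrix.one_mulVec] at hpow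
  obtain ⟨i, hi⟩ : ∃ i, x i ≠ 0 := Function.ne_iff.mp hx0
  have hcoord := congrFun hpow i
  simp only [Pi.smul_apply, smul_eq_mul] at hcoord
  exact mul_right_cancel₀ hi hcoord.symm

lemma gcd_eq_one_of_dvd_four (g : ℕ) (h4 : g ∣ 4) (hodd : ¬ 2 ∣ g) : g = 1 := by
  have h4' : g ∣ 2 ^ 2 := by norm_num at h4 ⊢; exact h4
  obtain ⟨i, hi, rfl⟩ := (Nat.dvd_prime_pow Nat.prime_two).mp h4'
  match i, hi with
  | 0, _ => rfl
  | 1, _ => exact absurd (by norm_num) hodd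
  | 2, _ => exact absurd (by norm_num) hodd

lemma exists_good_k (r : ℕ) (hr : 5 ≤ r) (h6 : r ≠ 6) (h10 : r ≠ 10) :
    ∃ k, Nat.Coprime k r ∧ r < 3 * k ∧ 2 * k < r := by
  rcases Nat.even_or_odd r with he | ho
  · rw [Nat.even_iff] at he
    by_cases h4 : r % 4 = 0
    · refine ⟨r / 2 - 1, ?_, by omega, by omega⟩
      rw [Nat.coprime_iff_gcd_eq_one]
      have hdl : Nat.gcd (r / 2 - 1) r ∣ r / 2 - 1 := Nat.gcd_dvd_left _ _
      have hdr : Nat.gcd (r / 2 - 1) r ∣ r := Nat.gcd_dvd_right _ _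
      have d1 : Nat.gcd (r / 2 - 1) r ∣ r - 2 := by
        have : Nat.gcd (r / 2 - 1) r ∣ 2 * (r / 2 - 1) := hdl.mul_left 2
        simpa [(by omega : 2 * (r / 2 - 1) = r - 2)] using this
      have h2 : Nat.gcd (r / 2 - 1) r ∣ 2 := by
        have := Nat.dvd_sub hdr d1
        simpa [Nat.sub_sub_self (by omega : 2 ≤ r)] using this
      rcases (Nat.dvd_prime Nat.prime_two).mp h2 with h | h
      · exact h
      · exfalso
        rw [h] at hdl
        obtain ⟨t, ht⟩ := hdl
        omega
    · have h2m : r % 4 = 2 := by omega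
      have hr14 : 14 ≤ r := by omega
      refine ⟨r / 2 - 2, ?_, by omega, by omega⟩
      rw [Nat.coprime_iff_gcd_eq_one]
      have hdl : Nat.gcd (r / 2 - 2) r ∣ r / 2 - 2 := Nat.gcd_dvd_left _ _
      have hdr : Nat.gcd (r / 2 - 2) r ∣ r := Nat.gcd_dvd_right _ _
      have d1 : Nat.gcd (r / 2 - 2) r ∣ r - 4 := by
        have : Nat.gcd (r / 2 - 2) r ∣ 2 * (r / 2 - 2) := hdl.mul_left 2
        simpa [(by omega : 2 * (r / 2 - 2) = r - 4)] using this
      have h2 : Nat.gcd (r / 2 - 2) r ∣ 4 := by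
        have := Nat.dvd_sub hdr d1
        simpa [Nat.sub_sub_self (by omega : 4 ≤ r)] using this
      refine gcd_eq_one_of_dvd_four _ h2 ?_
      intro hdd
      obtain ⟨t, ht⟩ := hdd.trans hdl
      omega
  · rw [Nat.odd_iff] at ho
    refine ⟨r / 2, ?_, by omega, by omega⟩
    rw [Nat.coprime_iff_gcd_eq_one]
    have hdl : Nat.gcd (r / 2) r ∣ r / 2 := Nat.gcd_dvd_left _ _
    have hdr : Nat.gcd (r / 2) r ∣ r := Nat.gcd_dvd_right _ _
    have d1 : Nat.gcd (r / 2) r ∣ r - 1 := by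
      have : Nat.gcd (r / 2) r ∣ 2 * (r / 2) := hdl.mul_left 2
      simpa [(by omega : 2 * (r / 2) = r - 1)] using this
    have h1 : Nat.gcd (r / 2) r ∣ 1 := by
      have := Nat.dvd_sub hdr d1
      simpa [Nat.sub_sub_self (by omega : 1 ≤ r)] using this
    exact Nat.eq_one_of_dvd_one h1

open Real in
lemma cos_lt_neg_half (k r : ℕ) (hr : 0 < r) (h1 : r < 3 * k) (h2 : 2 * k < r) :
    Real.cos (2 * π * k / r) < -(1/2) := by
  have hπ := Real.pi_pos
  have hr' : (0:ℝ) < r := by exact_mod_cast hr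
  have hk3 : (r:ℝ) < 3 * k := by exact_mod_cast h1
  have hk2 : 2 * (k:ℝ) < r := by exact_mod_cast h2
  have hlo : 2 * π / 3 < 2 * π * k / r := by
    rw [div_lt_div_iff₀ (by norm_num) hr']
    have hk0 : (0:ℝ) < k := by nlinarith
    nlinarith
  have hhi : 2 * π * k / r < π := by
    rw [div_lt_iff₀ hr']
    nlinarith
  have hcos : Real.cos (2 * π / 3) = -(1/2) := by
    have : 2 * π / 3 = π - π / 3 := by ring
    rw [this, Real.cos_pi_sub, Real.cos_pi_div_three]
  calc Real.cos (2 * π * k / r) < Real.cos (2 * π / 3) := by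
        apply Real.strictAntiOn_cos ⟨by positivity, by linarith⟩
          ⟨by positivity, le_of_lt hhi⟩ hlo
  _ = -(1/2) := hcos

lemma exists_pow_re_lt (r : ℕ) (hr : 5 ≤ r) (h6 : r ≠ 6) (h10 : r ≠ 10)
    (hgood : ∃ k, Nat.Coprime k r ∧ r < 3 * k ∧ 2 * k < r)
    (q : ℂ) (hq : IsPrimitiveRoot q r) :
    ∃ m : ℕ, Nat.Coprime m r ∧ (q ^ m).re < -(1/2) := by
  obtain ⟨k, hk, hk1, hk2⟩ := hgood
  have hr0 : r ≠ 0 := by omega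
  haveI : NeZero r := ⟨hr0⟩
  have hε : IsPrimitiveRoot (Complex.exp (2 * Real.pi * Complex.I / r)) r :=
    Complex.isPrimitiveRoot_exp r hr0
  obtain ⟨i, hilt, hi⟩ := hq.eq_pow_of_pow_eq_one hε.pow_eq_one
  have hic : Nat.Coprime i r := by
    rw [← hq.pow_iff_coprime (by omega) i]
    rw [hi]
    exact hε
  refine ⟨i * k, hic.mul hk, ?_⟩
  have hqm : q ^ (i * k) = Complex.exp (((2 * Real.pi * k / r : ℝ) : ℂ) * Complex.I) := by
    rw [pow_mul, hi, ← Complex.exp_nat_mul]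
    congr 1
    push_cast
    field_simp
  rw [hqm, Complex.exp_ofReal_mul_I_re]
  exact cos_lt_neg_half k r (by omega) hk1 hk2

lemma pow_eq_pow_of_mod {M : Type*} [Monoid M] (x : M) (r a b : ℕ) (hx : x ^ r = 1)
    (h : a % r = b % r) : x ^ a = x ^ b := by
  have key : ∀ n : ℕ, x ^ n = x ^ (n % r) := fun n => by
    conv_lhs => rw [← Nat.mod_add_div n r, pow_add, pow_mul, hx, one_pow, mul_one]
  rw [key a, key b, h]

lemma abs_eq_one_of_pow (z : ℂ) (n : ℕ) (hz : z ^ n = 1) (hn : n ≠ 0) : ‖z‖ = 1 := by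
  have h1 : ‖z‖ ^ n = 1 := by rw [← norm_pow, hz, norm_one]
  rcases lt_trichotomy (‖z‖) 1 with h | h | h
  · have := pow_lt_one₀ (norm_nonneg z) h hn
    linarith
  · exact h
  · have := one_lt_pow₀ h hn
    linarith

lemma galois_contradiction (r : ℕ) (hr5 : 5 ≤ r)
    (hgood : ∀ q' : ℂ, IsPrimitiveRoot q' r → ∃ m : ℕ, Nat.Coprime m r ∧ (q' ^ m).re < -(1/2))
    (q lam : ℂ) (hq : IsPrimitiveRoot q r) (M : ℕ) (hM : 0 < M) (hlam : lam ^ M = 1)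
    (hrel : lam + lam⁻¹ + q + q⁻¹ = 1) : False := by
  have hr0 : r ≠ 0 := by omega
  set N := r * M with hN
  have hN0 : N ≠ 0 := by positivity
  haveI : NeZero N := ⟨hN0⟩
  set ζ := Complex.exp (2 * Real.pi * Complex.I / N) with hζdef
  have hζ : IsPrimitiveRoot ζ N := Complex.isPrimitiveRoot_exp N hN0
  have hqN : q ^ N = 1 := by rw [hN, pow_mul, hq.pow_eq_one, one_pow]
  have hlamN : lam ^ N = 1 := by rw [hN, mul_comm, pow_mul, hlam, one_pow]
  obtain ⟨A, hAlt, hA⟩ := hζ.eq_pow_of_pow_eq_one hqN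
  obtain ⟨B, hBlt, hB⟩ := hζ.eq_pow_of_pow_eq_one hlamN
  obtain ⟨m, hm, hmre⟩ := hgood q hq
  obtain ⟨U, hU⟩ := ZMod.unitsMap_surjective (Dvd.intro M rfl : r ∣ N)
    (ZMod.unitOfCoprime m hm)
  set K := (U : ZMod N).val with hK
  have hKcop : Nat.Coprime K N := ZMod.val_coe_unit_coprime U
  have hKm : K % r = m % r := by
    have h2 : ((K : ℕ) : ZMod N) = (U : ZMod N) := by
      rw [hK, ZMod.natCast_val, ZMod.cast_id]
    have h3 := congrArg (fun (u : (ZMod r)ˣ) => (u : ZMod r)) hU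
    simp only [ZMod.unitsMap_def, Units.coe_map, MonoidHom.coe_coe,
      ZMod.coe_unitOfCoprime] at h3
    rw [← h2, map_natCast] at h3
    exact (ZMod.natCast_eq_natCast_iff K m r).mp h3
  have hqK : q ^ K = q ^ m := pow_eq_pow_of_mod q r K m hq.pow_eq_one hKm
  set P : Polynomial ℚ := Polynomial.X ^ B + Polynomial.X ^ (N - B) + Polynomial.X ^ A
    + Polynomial.X ^ (N - A) - 1 with hP
  have hζN1 : ζ ^ N = 1 := hζ.pow_eq_one
  have hinv : ∀ C : ℕ, C < N → ζ ^ (N - C) = (ζ ^ C)⁻¹ := by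
    intro C hC
    have hmul : ζ ^ (N - C) * ζ ^ C = 1 := by
      rw [← pow_add, Nat.sub_add_cancel (le_of_lt hC)]
      exact hζN1
    exact eq_inv_of_mul_eq_one_left hmul
  have hPζ : Polynomial.aeval ζ P = 0 := by
    rw [hP]
    simp only [map_add, map_sub, map_pow, map_one, Polynomial.aeval_X]
    rw [hinv A hAlt, hinv B hBlt, hA, hB]
    linear_combination hrel
  have hdvd : minpoly ℚ ζ ∣ P := minpoly.dvd ℚ ζ hPζ
  have hζK : IsPrimitiveRoot (ζ ^ K) N := hζ.pow_of_coprime K hKcop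
  have hmineq : minpoly ℚ ζ = minpoly ℚ (ζ ^ K) :=
    (Polynomial.cyclotomic_eq_minpoly_rat hζ (by omega)).symm.trans
      (Polynomial.cyclotomic_eq_minpoly_rat hζK (by omega))
  have hPζK : Polynomial.aeval (ζ ^ K) P = 0 := by
    obtain ⟨Q, hQ⟩ := hdvd
    rw [hQ, map_mul, hmineq, minpoly.aeval, zero_mul]
  have hexp : lam ^ K + (lam ^ K)⁻¹ + q ^ m + (q ^ m)⁻¹ - 1 = 0 := by
    rw [hP] at hPζK
    simp only [map_add, map_sub, map_pow, map_one, Polynomial.aeval_X] at hPζK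
    rw [← pow_mul, ← pow_mul, ← pow_mul, ← pow_mul, mul_comm K B, mul_comm K (N-B),
      mul_comm K A, mul_comm K (N-A), pow_mul, pow_mul, pow_mul, pow_mul,
      hinv A hAlt, hinv B hBlt, hA, hB, inv_pow, inv_pow] at hPζK
    rw [← hqK]
    exact hPζK
  have hablam : ‖lam ^ K‖ = 1 := by
    rw [norm_pow, abs_eq_one_of_pow lam N hlamN hN0, one_pow]
  have habq : ‖q ^ m‖ = 1 := by
    rw [norm_pow, abs_eq_one_of_pow q r hq.pow_eq_one hr0, one_pow]
  have hinv1 : (lam ^ K)⁻¹ = (starRingEnd ℂ) (lam ^ K) :=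
    Complex.inv_eq_conj (by rw [hablam])
  have hinv2 : (q ^ m)⁻¹ = (starRingEnd ℂ) (q ^ m) :=
    Complex.inv_eq_conj (by rw [habq])
  have h2c : ((2 * (lam ^ K).re : ℝ) : ℂ) + ((2 * (q ^ m).re : ℝ) : ℂ) = 1 := by
    rw [← Complex.add_conj, ← Complex.add_conj, ← hinv1, ← hinv2]
    linear_combination hexp
  have h3 : 2 * (lam ^ K).re + 2 * (q ^ m).re = 1 := by exact_mod_cast h2c
  have h4 : (lam ^ K).re ≤ 1 := by
    have := Complex.abs_re_le_norm (lam ^ K)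
    rw [hablam] at this
    exact (abs_le.mp this).2
  linarith

lemma detU_eq (q a b c d : ℂ) (h1 : a + d = 1) (h2 : b*c = a - a^2) :
    Matrix.det !![(q+1)*a-1, (q+1)*b; (q+1)*c, (q+1)*d-1] = -q := by
  rw [Matrix.det_fin_two_of]
  linear_combination ((q+1)^2*a - (q+1)) * h1 - (q+1)^2 * h2

lemma vN_eq_one (q j a' b' c' d' : ℂ) (hqj : q * j = 1) (h3 : a' + d' = 1)
    (h4 : b'*c' = a' - a'^2) :
    !![(q+1)*a'-1, (q+1)*b'; (q+1)*c', (q+1)*d'-1] *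
      !![(j+1)*a'-1, (j+1)*b'; (j+1)*c', (j+1)*d'-1] = 1 := by
  ext i k
  fin_cases i <;> fin_cases k <;>
    simp [Matrix.mul_apply, Fin.sum_univ_two, Matrix.one_apply]
  · linear_combination ((1:ℂ) + j + q + q*j) * h4 + (a') * hqj
  · linear_combination (b' + b'*j + b'*q + b'*q*j) * h3 + (b') * hqj
  · linear_combination (c' + c'*j + c'*q + c'*q*j) * h3 + (c') * hqj
  · linear_combination ((-1:ℂ) + q*j + d' + d'*j + d'*q + d'*q*j + -a' + -a'*j + -a'*q
      + -a'*q*j) * h3 + ((1:ℂ) + j + q + q*j) * h4 + ((1:ℂ) - a') * hqj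

lemma traceW_eq (q j a b c d a' b' c' d' : ℂ) (h1 : a + d = 1) (h3 : a' + d' = 1) :
    (!![(q+1)*a-1, (q+1)*b; (q+1)*c, (q+1)*d-1] *
      !![(j+1)*a'-1, (j+1)*b'; (j+1)*c', (j+1)*d'-1]).trace
    = (q+1)*(j+1)*(a*a' + b*c' + c*b' + d*d') - q - j := by
  rw [Matrix.trace]
  simp [Matrix.mul_apply, Fin.sum_univ_two, Matrix.diag]
  linear_combination (-(q+1)) * h1 + (-(j+1)) * h3

lemma key_braid (q a b c d a' b' c' d' : ℂ) (h1 : a + d = 1) (h2 : b*c = a - a^2)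
    (h3 : a' + d' = 1) (h4 : b'*c' = a' - a'^2)
    (U V : Matrix (Fin 2) (Fin 2) ℂ)
    (hU : U = !![(q+1)*a-1, (q+1)*b; (q+1)*c, (q+1)*d-1])
    (hV : V = !![(q+1)*a'-1, (q+1)*b'; (q+1)*c', (q+1)*d'-1])
    (hb : U*V*U = V*U*V) :
    (1 - (a*a' + b*c' + c*b' + d*d')) * ((q+1)^2*(a*a' + b*c' + c*b' + d*d') - q) * (q+1) = 0 := by
  subst hU hV
  have H00 := congrFun (congrFun hb 0) 0
  have H01 := congrFun (congrFun hb 0) 1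
  have H10 := congrFun (congrFun hb 1) 0
  have H11 := congrFun (congrFun hb 1) 1
  simp only [Matrix.mul_apply, Fin.sum_univ_two, Matrix.cons_val_zero, Matrix.cons_val_one,
    Matrix.head_cons, Matrix.head_fin_const, Matrix.cons_val', Matrix.empty_val',
    Matrix.cons_val_fin_one, Matrix.of_apply] at H00 H01 H10 H11
  linear_combination (a) * H00 + (b) * H10 + (c) * H01 + (d) * H11
    + ((1)*q + (1)*q^2 + (1)*d' + (2)*d'*q + (1)*d'*q^2 + (-1)*d'^2 + (-2)*d'^2*q + (-1)*d'^2*q^2 + (-1)*b'*c' + (-2)*b'*c'*q + (-1)*b'*c'*q^2 + (1)*d*q + (1)*d*q^2 + (-1)*d*d' + (-3)*d*d'*q + (-3)*d*d'*q^2 + (-1)*d*d'*q^3 + (1)*d^2 + (2)*d^2*q + (1)*d^2*q^2 + (-1)*d^2*d' + (-3)*d^2*d'*q + (-3)*d^2*d'*q^2 + (-1)*d^2*d'*q^3 + (-1)*c*b' + (-3)*c*b'*q + (-3)*c*b'*q^2 + (-1)*c*b'*q^3 + (-1)*c*d*b' + (-3)*c*d*b'*q + (-3)*c*d*b'*q^2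 + (-1)*c*d*b'*q^3 + (-1)*b*c' + (-3)*b*c'*q + (-3)*b*c'*q^2 + (-1)*b*c'*q^3 + (-1)*b*d*c' + (-3)*b*d*c'*q + (-3)*b*d*c'*q^2 + (-1)*b*d*c'*q^3 + (3)*b*c + (6)*b*c*q + (3)*b*c*q^2 + (-2)*b*c*d' + (-6)*b*c*d'*q + (-6)*b*c*d'*q^2 + (-2)*b*c*d'*q^3 + (-1)*b*c*a' + (-3)*b*c*a'*q + (-3)*b*c*a'*q^2 + (-1)*b*c*a'*q^3 + (-1)*a + (-3)*a*q + (-2)*a*q^2 + (2)*a*d' + (6)*a*d'*q + (6)*a*d'*q^2 + (2)*a*d'*q^3 + (2)*a*b'*c' + (6)*a*b'*c'*q + (6)*a*b'*c'*q^2 + (2)*a*b'*c'*q^3 + (-2)*a*a'*d' + (-6)*a*a'*d'*q + (-6)*a*a'*d'*q^2 + (-2)*a*a'*d'*q^3 + (-1)*a*d + (-2)*a*d*q + (-1)*a*d*q^2 + (1)*a*d*d' + (3)*a*d*d'*q + (3)*a*d*d'*q^2 + (1)*a*d*d'*q^3 + (1)*a^2 + (2)*a^2*q + (1)*a^2*q^2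 + (-1)*a^2*d' + (-3)*a^2*d'*q + (-3)*a^2*d'*q^2 + (-1)*a^2*d'*q^3) * h1
    + ((-1)*d' + (-2)*d'*q + (-1)*d'*q^2 + (1)*a' + (2)*a'*q + (1)*a'*q^2 + (-1)*c*b' + (-2)*c*b'*q + (-1)*c*b'*q^2 + (-1)*b*c' + (-2)*b*c'*q + (-1)*b*c'*q^2 + (-2)*b*c + (-6)*b*c*q + (-6)*b*c*q^2 + (-2)*b*c*q^3 + (2)*b*c*a' + (6)*b*c*a'*q + (6)*b*c*a'*q^2 + (2)*b*c*a'*q^3 + (2)*a + (6)*a*q + (6)*a*q^2 + (2)*a*q^3 + (1)*a*d' + (2)*a*d'*q + (1)*a*d'*q^2 + (-3)*a*a' + (-8)*a*a'*q + (-7)*a*a'*q^2 + (-2)*a*a'*q^3 + (1)*a*b*c + (3)*a*b*c*q + (3)*a*b*c*q^2 + (1)*a*b*c*q^3 + (-3)*a^2 + (-9)*a^2*q + (-9)*a^2*q^2 + (-3)*a^2*q^3 + (2)*a^2*a' + (6)*a^2*a'*q + (6)*a^2*a'*q^2 + (2)*a^2*a'*q^3 + (1)*a^3 + (3)*a^3*q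 + (3)*a^3*q^2 + (1)*a^3*q^3) * h3
    + ((-1) + (-2)*q + (-3)*q^2 + (-2)*q^3 + (-2)*b'*c' + (-6)*b'*c'*q + (-6)*b'*c'*q^2 + (-2)*b'*c'*q^3 + (3)*a' + (9)*a'*q + (9)*a'*q^2 + (3)*a'*q^3 + (-2)*a'^2 + (-6)*a'^2*q + (-6)*a'^2*q^2 + (-2)*a'^2*q^3 + (-1)*c*b' + (-3)*c*b'*q + (-3)*c*b'*q^2 + (-1)*c*b'*q^3 + (-1)*b*c' + (-3)*b*c'*q + (-3)*b*c'*q^2 + (-1)*b*c'*q^3 + (1)*a + (3)*a*q + (3)*a*q^2 + (1)*a*q^3 + (-2)*a*a' + (-6)*a*a'*q + (-6)*a*a'*q^2 + (-2)*a*a'*q^3) * h2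
    + ((-1) + (-2)*q + (-1)*q^2) * h4

/-- a homomorphism `B₃ → U(2)` (given by two unitaries `u, v` satisfying the
braid relation) whose generators are of the form `q•e - (1-e)` for nontrivial orthogonal
projections `e` (`q` a primitive `r`-th root of unity, `r ≥ 5`, `r ∉ {6,10}`), and which
do not commute modulo scalars, has infinite image in `PU(2) = U(2)/center`. -/
theorem braid_group_infinite_image_PU2 (r : ℕ) (hr : 5 ≤ r) (hr6 : r ≠ 6) (hr10 : r ≠ 10)
    (q : ℂ) (hq : IsPrimitiveRoot q r)
    (u v : Matrix.unitaryGroup (Fin 2) ℂ)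
    (hbraid : u * v * u = v * u * v)
    (hu : ∃ e : Matrix (Fin 2) (Fin 2) ℂ, e * e = e ∧ e.conjTranspose = e ∧
      e ≠ 0 ∧ e ≠ 1 ∧ (u : Matrix (Fin 2) (Fin 2) ℂ) = q • e - (1 - e))
    (hv : ∃ e : Matrix (Fin 2) (Fin 2) ℂ, e * e = e ∧ e.conjTranspose = e ∧
      e ≠ 0 ∧ e ≠ 1 ∧ (v : Matrix (Fin 2) (Fin 2) ℂ) = q • e - (1 - e))
    (hcomm : ¬ ∃ c : ℂ, ((u * v : Matrix.unitaryGroup (Fin 2) ℂ) : Matrix (Fin 2) (Fin 2) ℂ)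
      = c • ((v * u : Matrix.unitaryGroup (Fin 2) ℂ) : Matrix (Fin 2) (Fin 2) ℂ)) :
    Infinite ((Subgroup.closure {u, v}).map
      (QuotientGroup.mk' (Subgroup.center (Matrix.unitaryGroup (Fin 2) ℂ)))) := by
  classical
  obtain ⟨e, he2, -, he0, he1, hue⟩ := hu
  obtain ⟨f, hf2, -, hf0, hf1, hvf⟩ := hv
  obtain ⟨h1, h2⟩ := proj_entries e he2 he0 he1
  obtain ⟨h3, h4⟩ := proj_entries f hf2 hf0 hf1
  have hr0 : r ≠ 0 := by omega
  have hq0 : q ≠ 0 := hq.ne_zero hr0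
  have hq1 : q + 1 ≠ 0 := by
    intro h
    have hq2 : q ^ 2 = 1 := by linear_combination (q - 1) * h
    have hdvd := hq.dvd_of_pow_eq_one 2 hq2
    have := Nat.le_of_dvd (by norm_num) hdvd
    omega
  have hqj : q * q⁻¹ = 1 := mul_inv_cancel₀ hq0
  -- matrix forms of u and v
  have hU : (u : Matrix (Fin 2) (Fin 2) ℂ)
      = !![(q+1) * e 0 0 - 1, (q+1) * e 0 1; (q+1) * e 1 0, (q+1) * e 1 1 - 1] := by
    rw [hue]
    ext i k
    fin_cases i <;> fin_cases k <;>
      simp [Matrix.sub_apply, Matrix.smul_apply, Matrix.one_apply, smul_eq_mul] <;> ring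
  have hV : (v : Matrix (Fin 2) (Fin 2) ℂ)
      = !![(q+1) * f 0 0 - 1, (q+1) * f 0 1; (q+1) * f 1 0, (q+1) * f 1 1 - 1] := by
    rw [hvf]
    ext i k
    fin_cases i <;> fin_cases k <;>
      simp [Matrix.sub_apply, Matrix.smul_apply, Matrix.one_apply, smul_eq_mul] <;> ring
  -- braid relation on matrices
  have hbM : (u : Matrix (Fin 2) (Fin 2) ℂ) * v * u = (v : Matrix (Fin 2) (Fin 2) ℂ) * u * v := by
    have := congrArg (Subtype.val) hbraid
    simpa using this
  have hdich : (1 - (e 0 0 * f 0 0 + e 0 1 * f 1 0 + e 1 0 * f 0 1 + e 1 1 * f 1 1)) *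
      ((q+1)^2 * (e 0 0 * f 0 0 + e 0 1 * f 1 0 + e 1 0 * f 0 1 + e 1 1 * f 1 1) - q) *
      (q+1) = 0 :=
    key_braid q (e 0 0) (e 0 1) (e 1 0) (e 1 1) (f 0 0) (f 0 1) (f 1 0) (f 1 1)
      h1 h2 h3 h4 _ _ hU hV hbM
  -- the matrix of v⁻¹ and of w = u * v⁻¹
  have hvN : (v : Matrix (Fin 2) (Fin 2) ℂ) *
      !![(q⁻¹+1) * f 0 0 - 1, (q⁻¹+1) * f 0 1; (q⁻¹+1) * f 1 0, (q⁻¹+1) * f 1 1 - 1] = 1 := by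
    rw [hV]
    exact vN_eq_one q q⁻¹ (f 0 0) (f 0 1) (f 1 0) (f 1 1) hqj h3 h4
  have hNinv : ((v⁻¹ : Matrix.unitaryGroup (Fin 2) ℂ) : Matrix (Fin 2) (Fin 2) ℂ)
      = !![(q⁻¹+1) * f 0 0 - 1, (q⁻¹+1) * f 0 1; (q⁻¹+1) * f 1 0, (q⁻¹+1) * f 1 1 - 1] := by
    have hvv : ((v⁻¹ : Matrix.unitaryGroup (Fin 2) ℂ) : Matrix (Fin 2) (Fin 2) ℂ)
        * (v : Matrix (Fin 2) (Fin 2) ℂ) = 1 := by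
      have h := congrArg (Subtype.val) (inv_mul_cancel v)
      simpa using h
    calc ((v⁻¹ : Matrix.unitaryGroup (Fin 2) ℂ) : Matrix (Fin 2) (Fin 2) ℂ)
        = ((v⁻¹ : Matrix.unitaryGroup (Fin 2) ℂ) : Matrix (Fin 2) (Fin 2) ℂ)
          * ((v : Matrix (Fin 2) (Fin 2) ℂ) * _) := by rw [hvN, mul_one]
      _ = (((v⁻¹ : Matrix.unitaryGroup (Fin 2) ℂ) : Matrix (Fin 2) (Fin 2) ℂ)
          * (v : Matrix (Fin 2) (Fin 2) ℂ)) * _ := by rw [mul_assoc]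
      _ = _ := by rw [hvv, one_mul]
  set w : Matrix.unitaryGroup (Fin 2) ℂ := u * v⁻¹ with hwdef
  have hwW : (w : Matrix (Fin 2) (Fin 2) ℂ)
      = !![(q+1) * e 0 0 - 1, (q+1) * e 0 1; (q+1) * e 1 0, (q+1) * e 1 1 - 1] *
        !![(q⁻¹+1) * f 0 0 - 1, (q⁻¹+1) * f 0 1; (q⁻¹+1) * f 1 0, (q⁻¹+1) * f 1 1 - 1] := by
    have : (w : Matrix (Fin 2) (Fin 2) ℂ)
        = (u : Matrix (Fin 2) (Fin 2) ℂ) * ((v⁻¹ : Matrix.unitaryGroup (Fin 2) ℂ)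
          : Matrix (Fin 2) (Fin 2) ℂ) := by
      rw [hwdef]
      simp
    rw [this, hU, hNinv]
  have htrW : (w : Matrix (Fin 2) (Fin 2) ℂ).trace
      = (q+1)*(q⁻¹+1)*(e 0 0 * f 0 0 + e 0 1 * f 1 0 + e 1 0 * f 0 1 + e 1 1 * f 1 1)
        - q - q⁻¹ := by
    rw [hwW]
    exact traceW_eq q q⁻¹ (e 0 0) (e 0 1) (e 1 0) (e 1 1) (f 0 0) (f 0 1) (f 1 0) (f 1 1) h1 h3
  have hdetW : (w : Matrix (Fin 2) (Fin 2) ℂ).det = 1 := by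
    rw [hwW, Matrix.det_mul,
      detU_eq q (e 0 0) (e 0 1) (e 1 0) (e 1 1) h1 h2,
      detU_eq q⁻¹ (f 0 0) (f 0 1) (f 1 0) (f 1 1) h3 h4]
    linear_combination hqj
  rcases mul_eq_zero.mp hdich with hd | hd
  swap
  · exact absurd hd hq1
  rcases mul_eq_zero.mp hd with hT1 | hT2
  · -- tr(ef) = 1 : then w = 1 and u = v, contradicting hcomm
    have htr2 : (w : Matrix (Fin 2) (Fin 2) ℂ).trace = 2 := by
      rw [htrW]
      linear_combination (-(q+1)*(q⁻¹+1)) * hT1 + hqj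
    have hW1 : (w : Matrix (Fin 2) (Fin 2) ℂ) = 1 := U2_eq_one _ w.2 hdetW htr2
    have hw1 : w = 1 := Subtype.ext (by rw [hW1]; rfl)
    have huv : u = v := by
      rw [hwdef] at hw1
      exact mul_inv_eq_one.mp hw1
    exact absurd ⟨1, by rw [huv, one_smul]⟩ hcomm
  · -- main case
    have htr1 : (w : Matrix (Fin 2) (Fin 2) ℂ).trace = 1 - q - q⁻¹ := by
      have hfac : (q+1) * ((w : Matrix (Fin 2) (Fin 2) ℂ).trace - (1 - q - q⁻¹)) = 0 := by
        linear_combination (q+1) * htrW + (q⁻¹+1) * hT2 + hqj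
      rcases mul_eq_zero.mp hfac with h | h
      · exact absurd h hq1
      · linear_combination h
    by_contra hInf
    haveI hfin : Finite ((Subgroup.closure {u, v}).map
        (QuotientGroup.mk' (Subgroup.center (Matrix.unitaryGroup (Fin 2) ℂ)))) :=
      not_infinite_iff_finite.mp hInf
    have hwcl : w ∈ Subgroup.closure {u, v} := by
      refine mul_mem (Subgroup.subset_closure (Set.mem_insert u {v})) (inv_mem ?_)
      exact Subgroup.subset_closure (Set.mem_insert_of_mem u rfl)
    set x := QuotientGroup.mk' (Subgroup.center (Matrix.unitaryGroup (Fin 2) ℂ)) w with hx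
    have hxmem : x ∈ (Subgroup.closure {u, v}).map
        (QuotientGroup.mk' (Subgroup.center (Matrix.unitaryGroup (Fin 2) ℂ))) :=
      Subgroup.mem_map.mpr ⟨w, hwcl, rfl⟩
    set g : ((Subgroup.closure {u, v}).map
        (QuotientGroup.mk' (Subgroup.center (Matrix.unitaryGroup (Fin 2) ℂ)))) := ⟨x, hxmem⟩
      with hgdef
    set n := orderOf g with hn
    have hnpos : 0 < n := orderOf_pos g
    have hgn : g ^ n = 1 := pow_orderOf_eq_one g
    have hxn : x ^ n = 1 := by
      have := congrArg (Subtype.val) hgn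
      simpa using this
    have hwcent : w ^ n ∈ Subgroup.center (Matrix.unitaryGroup (Fin 2) ℂ) := by
      rw [← QuotientGroup.ker_mk' (Subgroup.center (Matrix.unitaryGroup (Fin 2) ℂ))]
      rw [MonoidHom.mem_ker, map_pow]
      exact hxn
    obtain ⟨cc, hcc⟩ := center_scalar (w ^ n) hwcent
    have hWn : (w : Matrix (Fin 2) (Fin 2) ℂ) ^ n = cc • 1 := by
      simpa using hcc
    -- eigenvalue
    obtain ⟨lam, hlamroot⟩ := Complex.exists_root
      (f := Polynomial.C 1 * Polynomial.X ^ 2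
        + Polynomial.C (-(w : Matrix (Fin 2) (Fin 2) ℂ).trace) * Polynomial.X + Polynomial.C 1)
      (by rw [Polynomial.degree_quadratic one_ne_zero]; norm_num)
    have hl : lam ^ 2 - (w : Matrix (Fin 2) (Fin 2) ℂ).trace * lam + 1 = 0 := by
      have := hlamroot
      simp only [Polynomial.IsRoot, Polynomial.eval_add, Polynomial.eval_mul,
        Polynomial.eval_pow, Polynomial.eval_C, Polynomial.eval_X] at this
      linear_combination this
    have hlam0 : lam ≠ 0 := by
      intro h
      rw [h] at hl
      simp at hl
    have hlk : lam * lam⁻¹ = 1 := mul_inv_cancel₀ hlam0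
    have hchar1 : lam ^ 2 - (w : Matrix (Fin 2) (Fin 2) ℂ).trace * lam
        + (w : Matrix (Fin 2) (Fin 2) ℂ).det = 0 := by
      rw [hdetW]; exact hl
    have hchar2 : (lam⁻¹) ^ 2 - (w : Matrix (Fin 2) (Fin 2) ℂ).trace * lam⁻¹
        + (w : Matrix (Fin 2) (Fin 2) ℂ).det = 0 := by
      rw [hdetW]
      linear_combination (lam⁻¹)^2 * hl
        + ((w : Matrix (Fin 2) (Fin 2) ℂ).trace * lam⁻¹ - lam * lam⁻¹ - 1) * hlk
    have heig1 : lam ^ n = cc := eigen_pow _ lam cc n hchar1 hWn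
    have heig2 : (lam⁻¹) ^ n = cc := eigen_pow _ lam⁻¹ cc n hchar2 hWn
    have hcc2 : cc * cc = 1 := by
      have hx : lam ^ n * (lam⁻¹) ^ n = 1 := by rw [← mul_pow, hlk, one_pow]
      rw [heig1, heig2] at hx
      exact hx
    have hlam2n : lam ^ (n * 2) = 1 := by
      rw [pow_mul, sq, ← hcc2, ← heig1]
    have hrel : lam + lam⁻¹ + q + q⁻¹ = 1 := by
      have hfac : lam * (lam + lam⁻¹ - (w : Matrix (Fin 2) (Fin 2) ℂ).trace) = 0 := by
        linear_combination hl + hlk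
      rcases mul_eq_zero.mp hfac with h | h
      · exact absurd h hlam0
      · rw [htr1] at h
        linear_combination h
    exact galois_contradiction r hr
      (fun q' hq' => exists_pow_re_lt r hr hr6 hr10 (exists_good_k r hr hr6 hr10) q' hq')
      q lam hq (n * 2) (by omega) hlam2n hrel
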